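/- arXiv:1909.02524 — 3 statements merged into one kernel-verified Lean document; each statement's English description precedes it below -/
import Mathlib

section
/- Let L ⊣ R : B → A be an adjunction between lfp categories with R finitary, L fully faithful, and L preserving monomorphisms. Then X is finitely generated in A if and only if LX is finitely generated in B. -/
open CategoryTheory Limits Opposite

universe w v u v₂ u₂

section Defs
variable {C : Type u} [Category.{v} C]

/-- An object is finitely presentable if its hom-functor preserves filtered colimits. -/
def IsFinitelyPresentable (X : C) : Prop :=
  ∀ (J : Type v) [SmallCategory J] [IsFiltered J],
    PreservesColimitsOfShape J (coyoneda.obj (op X))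

/-- An object is finitely generated if its hom-functor preserves filtered colimits of
diagrams all of whose connecting morphisms are monomorphisms. -/
def IsFinitelyGenerated (X : C) : Prop :=
  ∀ (J : Type v) [SmallCategory J] [IsFiltered J] (D : J ⥤ C),
    (∀ ⦃i j : J⦄ (f : i ⟶ j), Mono (D.map f)) →
    ∀ (c : Cocone D), Nonempty (IsColimit c) →
      Nonempty (IsColimit ((coyoneda.obj (op X)).mapCocone c))

/-- A presentation of an object as a filtered colimit of finitely presentable objects. -/
structure FilteredFpPresentation (X : C) : Type (max u (v + 1)) where
  J : Type v
  [cat : SmallCategory J]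
  [filt : IsFiltered J]
  D : J ⥤ C
  fp : ∀ j, _root_.IsFinitelyPresentable (D.obj j)
  c : Cocone D
  isColimit : Nonempty (IsColimit c)
  iso : Nonempty (c.pt ≅ X)

/-- A locally finitely presentable category. -/
def IsLFP (C : Type u) [Category.{v} C] : Prop :=
  HasColimits C ∧
  EssentiallySmall.{v} (ObjectProperty.FullSubcategory (fun X : C => _root_.IsFinitelyPresentable X)) ∧
  ∀ X : C, Nonempty (FilteredFpPresentation X)

end Defs

/-- For an adjunction `L ⊣ R` between lfp categories with `R` finitary,
`L` fully faithful and preserving monomorphisms, `X` is finitely generated in `A` iff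
`L X` is finitely generated in `B`. -/
theorem stmt3 {A : Type u} [Category.{v} A] {B : Type u₂} [Category.{v} B]
    (hA : IsLFP A) (hB : IsLFP B) (L : A ⥤ B) (R : B ⥤ A) (adj : L ⊣ R)
    [PreservesFilteredColimitsOfSize.{v, v} R] [L.Full] [L.Faithful]
    [L.PreservesMonomorphisms]
    (X : A) :
    IsFinitelyGenerated X ↔ IsFinitelyGenerated (L.obj X) := by
  constructor
  · -- X fg → LX fg
    intro hX J _ _ D hmono c ⟨hc⟩
    haveI : R.IsRightAdjoint := ⟨L, ⟨adj⟩⟩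
    have hRc : IsColimit (R.mapCocone c) := isColimitOfPreserves R hc
    obtain ⟨h⟩ := hX J (D ⋙ R)
      (fun i j f => by dsimp; exact R.map_mono (D.map f)) (R.mapCocone c) ⟨hRc⟩
    have h' : IsColimit ((R ⋙ coyoneda.obj (op X)).mapCocone c) := h
    have e : R ⋙ coyoneda.obj (op X) ≅ coyoneda.obj (op (L.obj X)) :=
      (adj.compCoyonedaIso.app (op X)).symm
    exact ⟨(IsColimit.mapCoconeEquiv e) h'⟩
  · -- LX fg → X fg
    intro hL J _ _ D hmono c ⟨hc⟩
    haveI := adj.leftAdjoint_preservesColimits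
    have hLc : IsColimit (L.mapCocone c) := isColimitOfPreserves L hc
    obtain ⟨h⟩ := hL J (D ⋙ L)
      (fun i j f => by dsimp; exact L.map_mono (D.map f)) (L.mapCocone c) ⟨hLc⟩
    have h' : IsColimit ((L ⋙ coyoneda.obj (op (L.obj X))).mapCocone c) := h
    have e : L ⋙ coyoneda.obj (op (L.obj X)) ≅ coyoneda.obj (op X) :=
      NatIso.ofComponents (fun Y =>
        (Functor.FullyFaithful.ofFullyFaithful L).homEquiv.symm.toIso)
        (fun f => by
          ext g
          simp only [Functor.FullyFaithful.homEquiv, Equiv.coe_fn_symm_mk]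
          apply L.map_injective
          simp)
    exact ⟨(IsColimit.mapCoconeEquiv e) h'⟩
end

section
/- Let T be a finitary monad on an lfp category A. Every free algebra (TX, μ_X) on a finitely presentable object X is generated by a finitely generated subobject: factorizing the unit η_X as a strong epimorphism e : X ↠ M followed by a monomorphism m : M ↪ TX, the subobject m does not factor through any proper subalgebra of (TX, μ_X). -/
open CategoryTheory Limits Opposite

universe w v u v₂ u₂

section Alg
variable {A : Type u} [Category.{v} A] {T : Monad A}

/-- A `T`-algebra is generated by a subobject `m : M ⟶ A` of the base category if `m`
factors through no proper subalgebra. -/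
def GeneratedBy (Aalg : T.Algebra) {M : A} (m : M ⟶ Aalg.A) : Prop :=
  ∀ (B : T.Algebra) (u : B ⟶ Aalg), Mono u → (∃ g : M ⟶ B.A, g ≫ u.f = m) → IsIso u

end Alg

/-- For a finitary monad `T` on an lfp category, every free algebra on a
finitely presentable object `X` is generated by the finitely generated subobject arising
from the (strong epi, mono)-factorization of the unit `η_X`. -/
theorem stmt9 {A : Type u} [Category.{v} A] (hA : IsLFP A) (T : Monad A)
    [PreservesFilteredColimitsOfSize.{v, v} (T : A ⥤ A)]
    (X : A) (hX : _root_.IsFinitelyPresentable X)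
    (M : A) (e : X ⟶ M) (m : M ⟶ (T : A ⥤ A).obj X)
    [StrongEpi e] [Mono m] (hfac : e ≫ m = T.η.app X) :
    GeneratedBy ((Monad.free T).obj X) m := by
  intro B u hu ⟨g, hg⟩
  -- Build the algebra morphism `free X ⟶ B` adjoint to `e ≫ g : X ⟶ B.A`.
  let f : (Monad.free T).obj X ⟶ B :=
    { f := (T : A ⥤ A).map (e ≫ g) ≫ B.a
      h := by
        show (T : A ⥤ A).map ((T : A ⥤ A).map (e ≫ g) ≫ B.a) ≫ B.a = T.μ.app X ≫ (T : A ⥤ A).map (e ≫ g) ≫ B.a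
        rw [(T : A ⥤ A).map_comp ((T : A ⥤ A).map (e ≫ g)) B.a, Category.assoc, ← B.assoc]
        slice_lhs 1 2 =>
          rw [show (T : A ⥤ A).map ((T : A ⥤ A).map (e ≫ g)) ≫ T.μ.app B.A =
              T.μ.app X ≫ (T : A ⥤ A).map (e ≫ g) from T.μ.naturality (e ≫ g)]
        simp }
  have hfu : f ≫ u = 𝟙 ((Monad.free T).obj X) := by
    ext
    show ((T : A ⥤ A).map (e ≫ g) ≫ B.a) ≫ u.f = 𝟙 _
    have hu' : B.a ≫ u.f = (T : A ⥤ A).map u.f ≫ T.μ.app X := u.h.symm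
    rw [Category.assoc, hu']
    have key : (T : A ⥤ A).map (e ≫ g) ≫ (T : A ⥤ A).map u.f = (T : A ⥤ A).map (T.η.app X) := by
      rw [← Functor.map_comp, Category.assoc, hg]
      exact congrArg (fun k => (T : A ⥤ A).map k) hfac
    exact (Category.assoc _ _ _).symm.trans
      ((congrArg (fun k => k ≫ T.μ.app X) key).trans (T.right_unit X))
  haveI : IsSplitEpi u := ⟨⟨⟨f, hfu⟩⟩⟩
  exact isIso_of_mono_of_isSplitEpi u
end

section
/- Let A be an lfp category and Sig(A) = A^{|A_fp|} the category of signatures, where |A_fp| is the discrete category of (representatives of) finitely presentable objects of A. The functor Φ sending a signature Σ to the polynomial endofunctor H_Σ X = ∐_{n∈A_fp} A(n,X)·Σ_n is left adjoint to the forgetful functor U : [A,A]_fin → Sig(A) given by (UF)_n = Fn, and U is monadic. -/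
/-!
# Monadicity theorems

We prove monadicity theorems which can establish a given functor is monadic. In particular, we
show three versions of Beck's monadicity theorem, and the reflexive (crude) monadicity theorem:

`G` is a monadic right adjoint if it has a left adjoint, and:

* `D` has, `G` preserves and reflects `G`-split coequalizers, see
  `CategoryTheory.Monad.monadicOfHasPreservesReflectsGSplitCoequalizers`
* `G` creates `G`-split coequalizers, see
  `CategoryTheory.Monad.monadicOfCreatesGSplitCoequalizers`
  (The converse of this is also shown, see
   `CategoryTheory.Monad.createsGSplitCoequalizersOfMonadic`)
* `D` has and `G` preserves `G`-split coequalizers, and `G` reflects isomorphisms, see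
  `CategoryTheory.Monad.monadicOfHasPreservesGSplitCoequalizersOfReflectsIsomorphisms`
* `D` has and `G` preserves reflexive coequalizers, and `G` reflects isomorphisms, see
  `CategoryTheory.Monad.monadicOfHasPreservesReflexiveCoequalizersOfReflectsIsomorphisms`

This file has been adapted to `Mathlib.CategoryTheory.Monad.Comonadicity`.
Please try to keep them in sync.

## Tags

Beck, monadicity, descent

-/

universe uv₁ uv₂ uu₁ uu₂

namespace CategoryTheory

namespace MonadX
open Monad

open Limits

noncomputable section

-- Hide the implementation details in this namespace.
namespace MonadicityInternal

variable {C : Type uu₁} {D : Type uu₂}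
variable [Category.{uv₁} C] [Category.{uv₂} D]
variable {G : D ⥤ C} {F : C ⥤ D} (adj : F ⊣ G)

/-- The "main pair" for an algebra `(A, α)` is the pair of morphisms `(F α, ε_FA)`. It is always a
reflexive pair, and will be used to construct the left adjoint to the comparison functor and show it
is an equivalence.
-/
instance main_pair_reflexive (A : adj.toMonad.Algebra) :
    IsReflexivePair (F.map A.a) (adj.counit.app (F.obj A.A)) := by
  apply IsReflexivePair.mk' (F.map (adj.unit.app _)) _ _
  · erw [← F.map_comp, ← F.map_id]
    exact congr_arg F.map A.unit
  · erw [adj.left_triangle_components]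

/-- The "main pair" for an algebra `(A, α)` is the pair of morphisms `(F α, ε_FA)`. It is always a
`G`-split pair, and will be used to construct the left adjoint to the comparison functor and show it
is an equivalence.
-/
instance main_pair_G_split (A : adj.toMonad.Algebra) :
    G.IsSplitPair (F.map A.a)
      (adj.counit.app (F.obj A.A)) where
  splittable := ⟨_, _, ⟨beckSplitCoequalizer A⟩⟩

/-- The object function for the left adjoint to the comparison functor. -/
def comparisonLeftAdjointObj (A : adj.toMonad.Algebra)
    [HasCoequalizer (F.map A.a) (adj.counit.app _)] : D :=
  coequalizer (F.map A.a) (adj.counit.app _)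

set_option linter.unusedVariables false in
/--
We have a bijection of homsets which will be used to construct the left adjoint to the comparison
functor.
-/
@[simps!]
def comparisonLeftAdjointHomEquiv (A : adj.toMonad.Algebra) (B : D)
    [HasCoequalizer (F.map A.a) (adj.counit.app (F.obj A.A))] :
    (comparisonLeftAdjointObj adj A ⟶ B) ≃ (A ⟶ (comparison adj).obj B) :=
  calc
    (comparisonLeftAdjointObj adj A ⟶ B) ≃ { f : F.obj A.A ⟶ B // _ } :=
      Cofork.IsColimit.homIso (colimit.isColimit _) B
    _ ≃ { g : A.A ⟶ G.obj B // G.map (F.map g) ≫ G.map (adj.counit.app B) = A.a ≫ g } := by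
      refine (adj.homEquiv _ _).subtypeEquiv ?_
      intro f
      rw [← (adj.homEquiv _ _).injective.eq_iff, Adjunction.homEquiv_naturality_left,
        adj.homEquiv_unit, adj.homEquiv_unit]
      erw [G.map_comp]
      dsimp
      erw [adj.right_triangle_components_assoc, ← G.map_comp, F.map_comp, Category.assoc,
        adj.counit_naturality, adj.left_triangle_components_assoc]
      apply eq_comm
    _ ≃ (A ⟶ (comparison adj).obj B) :=
      { toFun := fun g =>
          { f := _
            h := g.prop }
        invFun := fun f => ⟨f.f, f.h⟩
        left_inv := fun g => by ext; rfl
        right_inv := fun f => by ext; rfl }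

/-- Construct the adjunction to the comparison functor.
-/
def leftAdjointComparison
    [∀ A : adj.toMonad.Algebra, HasCoequalizer (F.map A.a)
      (adj.counit.app (F.obj A.A))] :
    adj.toMonad.Algebra ⥤ D := by
  refine
    Adjunction.leftAdjointOfEquiv (G := comparison adj)
      (F_obj := fun A => comparisonLeftAdjointObj adj A) (fun A B => ?_) ?_
  · apply comparisonLeftAdjointHomEquiv
  · intro A B B' g h
    ext1
    -- Porting note: the goal was previously closed by the following, which succeeds until
    -- `Category.assoc`.
    -- dsimp [comparisonLeftAdjointHomEquiv]
    -- rw [← adj.homEquiv_naturality_right, Category.assoc]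
    simp [Cofork.IsColimit.homIso, Adjunction.homEquiv_unit]
    erw [Equiv.trans_apply, Equiv.trans_apply, Equiv.subtypeEquiv_apply, Equiv.subtypeEquiv_apply]
    exact (congrArg (adj.homEquiv A.A B') (Category.assoc _ _ _).symm).trans
      (adj.homEquiv_naturality_right _ _)

/-- Provided we have the appropriate coequalizers, we have an adjunction to the comparison functor.
-/
@[simps! counit]
def comparisonAdjunction
    [∀ A : adj.toMonad.Algebra, HasCoequalizer (F.map A.a)
      (adj.counit.app (F.obj A.A))] :
    leftAdjointComparison adj ⊣ comparison adj :=
  Adjunction.adjunctionOfEquivLeft _ _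

variable {adj}

theorem comparisonAdjunction_unit_f_aux
    [∀ A : adj.toMonad.Algebra, HasCoequalizer (F.map A.a)
      (adj.counit.app (F.obj A.A))]
    (A : adj.toMonad.Algebra) :
    ((comparisonAdjunction adj).unit.app A).f =
      adj.homEquiv A.A _
        (coequalizer.π (F.map A.a) (adj.counit.app (F.obj A.A))) :=
  congr_arg (adj.homEquiv _ _) (Category.comp_id _)

/-- This is a cofork which is helpful for establishing monadicity: the morphism from the Beck
coequalizer to this cofork is the unit for the adjunction on the comparison functor.
-/
@[simps! pt]
def unitCofork (A : adj.toMonad.Algebra)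
    [HasCoequalizer (F.map A.a) (adj.counit.app (F.obj A.A))] :
    Cofork (G.map (F.map A.a)) (G.map (adj.counit.app (F.obj A.A))) :=
  Cofork.ofπ (G.map (coequalizer.π (F.map A.a) (adj.counit.app (F.obj A.A))))
    (by
      change _ = G.map _ ≫ _
      erw [← G.map_comp, coequalizer.condition, G.map_comp])

@[simp]
theorem unitCofork_π (A : adj.toMonad.Algebra)
    [HasCoequalizer (F.map A.a) (adj.counit.app (F.obj A.A))] :
    (unitCofork A).π = G.map (coequalizer.π (F.map A.a) (adj.counit.app (F.obj A.A))) :=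
  rfl

theorem comparisonAdjunction_unit_f
    [∀ A : adj.toMonad.Algebra, HasCoequalizer (F.map A.a)
      (adj.counit.app (F.obj A.A))]
    (A : adj.toMonad.Algebra) :
    ((comparisonAdjunction adj).unit.app A).f = (beckCoequalizer A).desc (unitCofork A) := by
  apply Limits.Cofork.IsColimit.hom_ext (beckCoequalizer A)
  erw [Cofork.IsColimit.π_desc]
  dsimp only [beckCofork_π, unitCofork_π]
  erw [comparisonAdjunction_unit_f_aux, ← adj.homEquiv_naturality_left A.a, coequalizer.condition,
    adj.homEquiv_naturality_right, adj.homEquiv_unit, Category.assoc]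
  apply adj.right_triangle_components_assoc

variable (adj)

/-- The cofork which describes the counit of the adjunction: the morphism from the coequalizer of
this pair to this morphism is the counit.
-/
@[simps!]
def counitCofork (B : D) :
    Cofork (F.map (G.map (adj.counit.app B)))
      (adj.counit.app (F.obj (G.obj B))) :=
  Cofork.ofπ (adj.counit.app B) (adj.counit_naturality _)

variable {adj} in
/-- The unit cofork is a colimit provided `G` preserves it. -/
def unitColimitOfPreservesCoequalizer (A : adj.toMonad.Algebra)
    [HasCoequalizer (F.map A.a) (adj.counit.app (F.obj A.A))]
    [PreservesColimit (parallelPair (F.map A.a) (adj.counit.app (F.obj A.A))) G] :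
    IsColimit (unitCofork (G := G) A) :=
  isColimitOfHasCoequalizerOfPreservesColimit G _ _

/-- The counit cofork is a colimit provided `G` reflects it. -/
def counitCoequalizerOfReflectsCoequalizer (B : D)
    [ReflectsColimit (parallelPair (F.map (G.map (adj.counit.app B)))
      (adj.counit.app (F.obj (G.obj B)))) G] :
    IsColimit (counitCofork (adj := adj) B) :=
  isColimitOfIsColimitCoforkMap G _ (beckCoequalizer ((comparison adj).obj B))

-- Porting note: Lean 3 didn't seem to need this
instance
    [∀ A : adj.toMonad.Algebra, HasCoequalizer (F.map A.a) (adj.counit.app (F.obj A.A))]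
    (B : D) : HasColimit (parallelPair
      (F.map (G.map (NatTrans.app adj.counit B)))
      (NatTrans.app adj.counit (F.obj (G.obj B)))) :=
  inferInstanceAs <| HasCoequalizer
    (F.map ((comparison adj).obj B).a)
    (adj.counit.app (F.obj ((comparison adj).obj B).A))

theorem comparisonAdjunction_counit_app
    [∀ A : adj.toMonad.Algebra, HasCoequalizer (F.map A.a) (adj.counit.app (F.obj A.A))] (B : D) :
    (comparisonAdjunction adj).counit.app B = colimit.desc _ (counitCofork adj B) := by
  haveI := ‹∀ A : adj.toMonad.Algebra, HasCoequalizer (F.map A.a) (adj.counit.app (F.obj A.A))› ((comparison adj).obj B)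
  apply coequalizer.hom_ext
  erw [colimit.ι_desc]
  simp
  erw [colimit.ι_desc]
  change (adj.homEquiv (G.obj B) B).symm (𝟙 _) = _
  simp [Adjunction.homEquiv_counit]

end MonadicityInternal

open CategoryTheory Adjunction Monad MonadX.MonadicityInternal

variable {C : Type uu₁} {D : Type uu₂}
variable [Category.{uv₁} C] [Category.{uv₂} D]
variable {G : D ⥤ C} {F : C ⥤ D} (adj : F ⊣ G)

variable (G) in
/--
If `G` is monadic, it creates colimits of `G`-split pairs. This is the "boring" direction of Beck's
monadicity theorem, the converse is given in `monadicOfCreatesGSplitCoequalizers`.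
-/
def createsGSplitCoequalizersOfMonadic [MonadicRightAdjoint G] ⦃A B⦄ (f g : A ⟶ B)
    [G.IsSplitPair f g] : CreatesColimit (parallelPair f g) G := by
  apply (config := {allowSynthFailures := true}) monadicCreatesColimitOfPreservesColimit
    -- Porting note: oddly (config := {allowSynthFailures := true}) had no effect here and below
  all_goals
    apply @preservesColimit_of_iso_diagram _ _ _ _ _ _ _ _ _ (diagramIsoParallelPair.{uv₁} _).symm ?_
    dsimp
    infer_instance

section BeckMonadicity

-- Porting note: added these to replace parametric instances https://github.com/leanprover/lean4/issues/2311
-- When this is fixed the proofs below that struggle with instances should be reviewed.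
-- [∀ ⦃A B⦄ (f g : A ⟶ B) [G.IsSplitPair f g], HasCoequalizer f g]
class HasCoequalizerOfIsSplitPair (G : D ⥤ C) : Prop where
  out : ∀ {A B} (f g : A ⟶ B) [G.IsSplitPair f g], HasCoequalizer f g

-- Porting note: cannot find synth order
-- instance {A B} (f g : A ⟶ B) [G.IsSplitPair f g] [HasCoequalizerOfIsSplitPair G] :
--     HasCoequalizer f g := HasCoequalizerOfIsSplitPair.out f g

instance [HasCoequalizerOfIsSplitPair G] : ∀ (A : Algebra adj.toMonad),
    HasCoequalizer (F.map A.a)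
      (adj.counit.app (F.obj A.A)) :=
  fun _ => HasCoequalizerOfIsSplitPair.out G _ _

-- Porting note: added these to replace parametric instances https://github.com/leanprover/lean4/issues/2311
-- [∀ ⦃A B⦄ (f g : A ⟶ B) [G.IsSplitPair f g], PreservesColimit (parallelPair f g) G]
class PreservesColimitOfIsSplitPair (G : D ⥤ C) where
  out : ∀ {A B} (f g : A ⟶ B) [G.IsSplitPair f g], PreservesColimit (parallelPair f g) G

instance {A B} (f g : A ⟶ B) [G.IsSplitPair f g] [PreservesColimitOfIsSplitPair G] :
    PreservesColimit (parallelPair f g) G := PreservesColimitOfIsSplitPair.out f g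

instance [PreservesColimitOfIsSplitPair G] : ∀ (A : Algebra adj.toMonad),
   PreservesColimit (parallelPair (F.map A.a)
      (NatTrans.app adj.counit (F.obj A.A))) G :=
  fun _ => PreservesColimitOfIsSplitPair.out _ _

-- Porting note: added these to replace parametric instances https://github.com/leanprover/lean4/issues/2311
-- [∀ ⦃A B⦄ (f g : A ⟶ B) [G.IsSplitPair f g], ReflectsColimit (parallelPair f g) G] :
class ReflectsColimitOfIsSplitPair (G : D ⥤ C) where
  out : ∀ {A B} (f g : A ⟶ B) [G.IsSplitPair f g], ReflectsColimit (parallelPair f g) G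

instance {A B} (f g : A ⟶ B) [G.IsSplitPair f g] [ReflectsColimitOfIsSplitPair G] :
    ReflectsColimit (parallelPair f g) G := ReflectsColimitOfIsSplitPair.out f g

instance [ReflectsColimitOfIsSplitPair G] : ∀ (A : Algebra adj.toMonad),
    ReflectsColimit (parallelPair (F.map A.a)
      (NatTrans.app adj.counit (F.obj A.A))) G :=
  fun _ => ReflectsColimitOfIsSplitPair.out _ _

/-- To show `G` is a monadic right adjoint, we can show it preserves and reflects `G`-split
coequalizers, and `D` has them.
-/
def monadicOfHasPreservesReflectsGSplitCoequalizers [HasCoequalizerOfIsSplitPair G]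
    [PreservesColimitOfIsSplitPair G] [ReflectsColimitOfIsSplitPair G] :
    MonadicRightAdjoint G where
  L := F
  adj := adj
  eqv := by
    have : ∀ (X : Algebra adj.toMonad), IsIso ((comparisonAdjunction adj).unit.app X) := by
      intro X
      apply @isIso_of_reflects_iso _ _ _ _ _ _ _ (Monad.forget adj.toMonad) ?_ _
      · change IsIso ((comparisonAdjunction adj).unit.app X).f
        rw [comparisonAdjunction_unit_f]
        change
          IsIso
            (IsColimit.coconePointUniqueUpToIso (beckCoequalizer X)
                (unitColimitOfPreservesCoequalizer X)).hom
        exact (IsColimit.coconePointUniqueUpToIso _ _).isIso_hom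
    have : ∀ (Y : D), IsIso ((comparisonAdjunction adj).counit.app Y) := by
      intro Y
      rw [comparisonAdjunction_counit_app]
      -- Porting note: passing instances through
      change IsIso (IsColimit.coconePointUniqueUpToIso _ ?_).hom
      infer_instance
      -- Porting note: passing instances through
      apply @counitCoequalizerOfReflectsCoequalizer _ _ _ _ _ _ _ _ ?_
      letI _ :
        G.IsSplitPair (F.map (G.map (adj.counit.app Y)))
          (adj.counit.app (F.obj (G.obj Y))) :=
        MonadicityInternal.main_pair_G_split _ ((comparison adj).obj Y)
      infer_instance
    exact (comparisonAdjunction adj).toEquivalence.isEquivalence_inverse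

-- Porting note: added these to replace parametric instances https://github.com/leanprover/lean4/issues/2311
-- [∀ ⦃A B⦄ (f g : A ⟶ B) [G.IsSplitPair f g], CreatesColimit (parallelPair f g) G] :
class CreatesColimitOfIsSplitPair (G : D ⥤ C) where
  out : ∀ {A B} (f g : A ⟶ B) [G.IsSplitPair f g], CreatesColimit (parallelPair f g) G

instance {A B} (f g : A ⟶ B) [G.IsSplitPair f g] [CreatesColimitOfIsSplitPair G] :
    CreatesColimit (parallelPair f g) G := CreatesColimitOfIsSplitPair.out f g

instance [CreatesColimitOfIsSplitPair G] : ∀ (A : Algebra adj.toMonad),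
    CreatesColimit (parallelPair (F.map A.a)
      (NatTrans.app adj.counit (F.obj A.A))) G :=
  fun _ => CreatesColimitOfIsSplitPair.out _ _

/--
Beck's monadicity theorem. If `G` has a left adjoint and creates coequalizers of `G`-split pairs,
then it is monadic.
This is the converse of `createsGSplitCoequalizersOfMonadic`.
-/
def monadicOfCreatesGSplitCoequalizers [CreatesColimitOfIsSplitPair G] :
    MonadicRightAdjoint G := by
  let I {A B} (f g : A ⟶ B) [G.IsSplitPair f g] : HasColimit (parallelPair f g ⋙ G) := by
    rw [hasColimit_iff_of_iso (diagramIsoParallelPair.{uv₁} _)]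
    exact inferInstanceAs <| HasCoequalizer (G.map f) (G.map g)
  have : HasCoequalizerOfIsSplitPair G := ⟨fun _ _ => hasColimit_of_created (parallelPair _ _) G⟩
  have : PreservesColimitOfIsSplitPair G := ⟨by intros; infer_instance⟩
  have : ReflectsColimitOfIsSplitPair G := ⟨by intros; infer_instance⟩
  exact monadicOfHasPreservesReflectsGSplitCoequalizers adj

/-- An alternate version of Beck's monadicity theorem. If `G` reflects isomorphisms, preserves
coequalizers of `G`-split pairs and `C` has coequalizers of `G`-split pairs, then it is monadic.
-/
def monadicOfHasPreservesGSplitCoequalizersOfReflectsIsomorphisms [G.ReflectsIsomorphisms]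
    [HasCoequalizerOfIsSplitPair G] [PreservesColimitOfIsSplitPair G] :
    MonadicRightAdjoint G := by
  have : ReflectsColimitOfIsSplitPair G := ⟨fun f g _ => by
    have := HasCoequalizerOfIsSplitPair.out G f g
    apply reflectsColimit_of_reflectsIsomorphisms⟩
  apply monadicOfHasPreservesReflectsGSplitCoequalizers adj

end BeckMonadicity

section ReflexiveMonadicity

variable [HasReflexiveCoequalizers D] [G.ReflectsIsomorphisms]

-- Porting note: added these to replace parametric instances https://github.com/leanprover/lean4/issues/2311
-- [∀ ⦃A B⦄ (f g : A ⟶ B) [G.IsReflexivePair f g], PreservesColimit (parallelPair f g) G] :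
class PreservesColimitOfIsReflexivePair (G : C ⥤ D) where
  out : ∀ ⦃A B⦄ (f g : A ⟶ B) [IsReflexivePair f g], PreservesColimit (parallelPair f g) G

instance {A B} (f g : A ⟶ B) [IsReflexivePair f g] [PreservesColimitOfIsReflexivePair G] :
  PreservesColimit (parallelPair f g) G := PreservesColimitOfIsReflexivePair.out f g

instance [PreservesColimitOfIsReflexivePair G] : ∀ X : Algebra adj.toMonad,
    PreservesColimit (parallelPair (F.map X.a)
      (NatTrans.app adj.counit (F.obj X.A))) G :=
 fun _ => PreservesColimitOfIsReflexivePair.out _ _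

variable [PreservesColimitOfIsReflexivePair G]

/-- Reflexive (crude) monadicity theorem. If `G` has a right adjoint, `D` has and `G` preserves
reflexive coequalizers and `G` reflects isomorphisms, then `G` is monadic.
-/
def monadicOfHasPreservesReflexiveCoequalizersOfReflectsIsomorphisms : MonadicRightAdjoint G where
  L := F
  adj := adj
  eqv := by
    haveI : ∀ A : adj.toMonad.Algebra, HasCoequalizer (F.map A.a) (adj.counit.app (F.obj A.A)) :=
      fun A => by haveI := main_pair_reflexive adj A; exact HasReflexiveCoequalizers.has_coeq _ _
    have : ∀ (X : Algebra adj.toMonad), IsIso ((comparisonAdjunction adj).unit.app X) := by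
      intro X
      apply
        @isIso_of_reflects_iso _ _ _ _ _ _ _ (Monad.forget adj.toMonad) ?_ _
      · change IsIso ((comparisonAdjunction adj).unit.app X).f
        rw [comparisonAdjunction_unit_f]
        exact (IsColimit.coconePointUniqueUpToIso (beckCoequalizer X)
          (unitColimitOfPreservesCoequalizer X)).isIso_hom
    have : ∀ (Y : D), IsIso ((comparisonAdjunction adj).counit.app Y) := by
      intro Y
      rw [comparisonAdjunction_counit_app]
      -- Porting note: passing instances through
      change IsIso (IsColimit.coconePointUniqueUpToIso _ ?_).hom
      infer_instance
      -- Porting note: passing instances through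
      apply @counitCoequalizerOfReflectsCoequalizer _ _ _ _ _ _ _ _ ?_
      apply reflectsColimit_of_reflectsIsomorphisms
    exact (comparisonAdjunction adj).toEquivalence.isEquivalence_inverse

end ReflexiveMonadicity

end

end MonadX

end CategoryTheory


open CategoryTheory Limits Opposite

universe w v u v₂ u₂

/-- A functor between categories is finitary if it preserves filtered colimits. -/
def Finitary {C : Type u} [Category.{v} C] {D : Type u₂} [Category.{v₂} D] (F : C ⥤ D) : Prop :=
  ∀ (J : Type v) [SmallCategory J] [IsFiltered J], PreservesColimitsOfShape J F

variable {A : Type u} [Category.{v} A] [HasColimits A]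

/-- The polynomial endofunctor `H_Σ X = ∐_{i} A(σ i, X) · Σ_i` associated to a signature
`Sgn : ι → A`, where `σ : ι → A` enumerates the finitely presentable objects. -/
noncomputable def polynomialFunctor {ι : Type v} (σ : ι → A) (Sgn : ι → A) : A ⥤ A where
  obj X := ∐ (fun p : (Σ i : ι, (σ i ⟶ X)) => Sgn p.1)
  map {X Y} f := Sigma.desc fun p =>
    Sigma.ι (fun p : (Σ i : ι, (σ i ⟶ Y)) => Sgn p.1) ⟨p.1, p.2 ≫ f⟩
  map_id X := by
    ext p
    simp only [Sigma.ι_desc]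
    rw [Category.comp_id]
    simp
  map_comp {X Y Z} f g := by
    ext p
    rw [← Category.assoc, Sigma.ι_desc]
    simp only [Sigma.ι_desc]
    congr 1
    simp

/-- The forgetful functor from finitary endofunctors to signatures. -/
def sigForget {ι : Type v} (σ : ι → A) :
    ObjectProperty.FullSubcategory (fun F : A ⥤ A => Finitary F) ⥤ (ι → A) where
  obj F i := F.obj.obj (σ i)
  map {F G} α i := α.hom.app (σ i)

namespace Stmt15Aux

variable {A : Type u} [Category.{v} A] [HasColimits A]

section Closure

variable {K : Type u₂} [Category.{v₂} K] {J : Type v} [SmallCategory J]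
variable (P : K ⥤ A ⥤ A) (D : J ⥤ A) (t : Cocone D) (c : Cocone P)


/-- Naturality of a cocone leg, stated with `c.pt`. -/
theorem leg_naturality (c : Cocone P) (k : K) {X Y : A} (f : X ⟶ Y) :
    (P.obj k).map f ≫ (c.ι.app k).app Y = (c.ι.app k).app X ≫ c.pt.map f :=
  (c.ι.app k).naturality f

/-- The inner cocone used to show that colimits of finitary functors are finitary. -/
@[simps]
def innerCocone (s : Cocone (D ⋙ c.pt)) (k : K) : Cocone (D ⋙ P.obj k) where
  pt := s.pt
  ι :=
    { app := fun j => (c.ι.app k).app (D.obj j) ≫ s.ι.app j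
      naturality := fun j j' f => by
        dsimp
        rw [Category.comp_id, ← Category.assoc, leg_naturality P c k (D.map f), Category.assoc]
        congr 1
        exact s.w f }

variable (hk : ∀ k, IsColimit ((P.obj k).mapCocone t))

/-- The outer cocone used to show that colimits of finitary functors are finitary. -/
@[simps]
def outerCocone (s : Cocone (D ⋙ c.pt)) : Cocone (P ⋙ (evaluation A A).obj t.pt) where
  pt := s.pt
  ι :=
    { app := fun k => (hk k).desc (innerCocone P D c s k)
      naturality := fun k k' g => by
        refine (hk k).hom_ext fun j => ?_
        have h1 := (hk k').fac (innerCocone P D c s k') j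
        have h2 := (hk k).fac (innerCocone P D c s k) j
        dsimp at h1 h2 ⊢
        erw [Category.comp_id, h2, ← Category.assoc,
          (P.map g).naturality, Category.assoc, h1, ← Category.assoc,
          ← NatTrans.comp_app, c.w g]
        rfl }

/-- A colimit of finitary endofunctors is finitary. -/
theorem finitary_of_isColimit [HasColimitsOfShape K A] (hP : ∀ k, Finitary (P.obj k))
    (hc : IsColimit c) : Finitary c.pt := by
  intro J' _ _
  refine ⟨fun {D} => ⟨fun {t} ht => ?_⟩⟩
  have hk : ∀ k, IsColimit ((P.obj k).mapCocone t) := fun k => by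
    have := hP k J'
    exact isColimitOfPreserves (P.obj k) ht
  have hev : ∀ X : A, IsColimit (((evaluation A A).obj X).mapCocone c) := fun X =>
    isColimitOfPreserves _ hc
  refine ⟨{ desc := fun s => (hev t.pt).desc (outerCocone P D t c hk s)
            fac := ?_
            uniq := ?_ }⟩
  · intro s j
    refine (hev (D.obj j)).hom_ext fun k => ?_
    have e1 := (hev t.pt).fac (outerCocone P D t c hk s) k
    have e2 := (hk k).fac (innerCocone P D c s k) j
    dsimp at e1 e2 ⊢
    erw [← Category.assoc, ← leg_naturality P c k (X := D.obj j) (Y := t.pt) (t.ι.app j), Category.assoc, e1, e2]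
    rfl
  · intro s m hm
    refine (hev t.pt).hom_ext fun k => ?_
    have e1 := (hev t.pt).fac (outerCocone P D t c hk s) k
    dsimp at e1 ⊢
    erw [e1]
    refine (hk k).hom_ext fun j => ?_
    have e2 := (hk k).fac (innerCocone P D c s k) j
    have hmj := hm j
    dsimp at e2 hmj ⊢
    erw [e2, ← Category.assoc, leg_naturality P c k (X := D.obj j) (Y := t.pt) (t.ι.app j), Category.assoc, hmj]
    rfl

end Closure
end Stmt15Aux
namespace Stmt15Aux
section Poly

variable {A : Type u} [Category.{v} A] [HasColimits A]
variable {ι : Type v} (σ : ι → A) (Sgn : ι → A)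

theorem poly_ι_comp_map {X Y : A} (f : X ⟶ Y) (p : Σ i : ι, (σ i ⟶ X)) :
    Sigma.ι (fun p : Σ i : ι, (σ i ⟶ X) => Sgn p.1) p ≫ (polynomialFunctor σ Sgn).map f
      = Sigma.ι (fun p : Σ i : ι, (σ i ⟶ Y) => Sgn p.1) ⟨p.1, p.2 ≫ f⟩ := by
  simp [polynomialFunctor]

variable {J : Type v} [SmallCategory J] [IsFiltered J] (D : J ⥤ A) (t : Cocone D)

theorem poly_wd (hco : ∀ i, IsColimit ((coyoneda.obj (op (σ i))).mapCocone t))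
    (s : Cocone (D ⋙ polynomialFunctor σ Sgn)) {i : ι} {j j' : J}
    (g : σ i ⟶ D.obj j) (g' : σ i ⟶ D.obj j')
    (h : g ≫ t.ι.app j = g' ≫ t.ι.app j') :
    Sigma.ι (fun p : Σ i' : ι, (σ i' ⟶ D.obj j) => Sgn p.1) ⟨i, g⟩ ≫ s.ι.app j
      = Sigma.ι (fun p : Σ i' : ι, (σ i' ⟶ D.obj j') => Sgn p.1) ⟨i, g'⟩ ≫ s.ι.app j' := by
  obtain ⟨k, u, v, huv⟩ :=
    (Types.FilteredColimit.isColimit_eq_iff (D ⋙ coyoneda.obj (op (σ i))) (hco i)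
      (xi := g) (xj := g')).mp (show ((coyoneda.obj (op (σ i))).mapCocone t).ι.app j g = ((coyoneda.obj (op (σ i))).mapCocone t).ι.app j' g' from h)
  have hg : g ≫ D.map u = g' ≫ D.map v := huv
  erw [← s.w u, ← s.w v, ← Category.assoc, ← Category.assoc]
  congr 1
  have h1 : (D ⋙ polynomialFunctor σ Sgn).map u = (polynomialFunctor σ Sgn).map (D.map u) := rfl
  have h2 : (D ⋙ polynomialFunctor σ Sgn).map v = (polynomialFunctor σ Sgn).map (D.map v) := rfl
  rw [h1, h2, poly_ι_comp_map, poly_ι_comp_map, hg]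

theorem poly_finitary (hσfp : ∀ i, _root_.IsFinitelyPresentable (σ i)) :
    Finitary (polynomialFunctor σ Sgn) := by
  intro J _ _
  refine ⟨fun {D} => ⟨fun {t} ht => ?_⟩⟩
  have hco : ∀ i, IsColimit ((coyoneda.obj (op (σ i))).mapCocone t) := fun i => by
    have := hσfp i J
    exact isColimitOfPreserves _ ht
  have hrep : ∀ (i : ι) (f : σ i ⟶ t.pt), ∃ j, ∃ g : σ i ⟶ D.obj j, g ≫ t.ι.app j = f := by
    intro i f
    obtain ⟨j, y, hy⟩ := Types.jointly_surjective _ (hco i) f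
    exact ⟨j, y, hy⟩
  refine ⟨{ desc := fun s => Sigma.desc fun p =>
              Sigma.ι (fun q : Σ i' : ι, (σ i' ⟶ D.obj (hrep p.1 p.2).choose) => Sgn q.1)
                ⟨p.1, (hrep p.1 p.2).choose_spec.choose⟩ ≫
                  s.ι.app (hrep p.1 p.2).choose
            fac := ?_
            uniq := ?_ }⟩
  · intro s j
    refine Sigma.hom_ext _ _ fun p => ?_
    obtain ⟨i, g⟩ := p
    have h1 : ((polynomialFunctor σ Sgn).mapCocone t).ι.app j
        = (polynomialFunctor σ Sgn).map (t.ι.app j) := rfl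
    erw [← Category.assoc, h1, poly_ι_comp_map, Sigma.ι_desc]
    exact poly_wd σ Sgn D t hco s _ _
      ((hrep i (g ≫ t.ι.app j)).choose_spec.choose_spec)
  · intro s m hm
    refine Sigma.hom_ext _ _ fun p => ?_
    obtain ⟨i, f⟩ := p
    rw [Sigma.ι_desc]
    have hspec := (hrep i f).choose_spec.choose_spec
    have h1 : Sigma.ι (fun p : Σ i' : ι, (σ i' ⟶ t.pt) => Sgn p.1) ⟨i, f⟩
        = Sigma.ι (fun q : Σ i' : ι, (σ i' ⟶ D.obj ((hrep i f).choose)) => Sgn q.1)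
            ⟨i, (hrep i f).choose_spec.choose⟩ ≫
            (polynomialFunctor σ Sgn).map (t.ι.app ((hrep i f).choose)) := by
      rw [poly_ι_comp_map, hspec]
      rfl
    have hmj := hm ((hrep i f).choose)
    have h2 : ((polynomialFunctor σ Sgn).mapCocone t).ι.app ((hrep i f).choose)
        = (polynomialFunctor σ Sgn).map (t.ι.app ((hrep i f).choose)) := rfl
    rw [h2] at hmj
    erw [h1, Category.assoc, hmj]

end Poly
end Stmt15Aux
namespace Stmt15Aux
section Adj

variable {A : Type u} [Category.{v} A] [HasColimits A]
variable {ι : Type v} (σ : ι → A)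

/-- The hom-equivalence for the polynomial functor, at the level of plain endofunctors. -/
noncomputable def polyEquivCore (Sgn : ι → A) (F : A ⥤ A) :
    (polynomialFunctor σ Sgn ⟶ F) ≃ ∀ i, (Sgn i ⟶ F.obj (σ i)) where
  toFun α i := Sigma.ι (fun p : Σ i' : ι, (σ i' ⟶ σ i) => Sgn p.1) ⟨i, 𝟙 (σ i)⟩ ≫ α.app (σ i)
  invFun u :=
    { app := fun X => Sigma.desc fun p => u p.1 ≫ F.map p.2
      naturality := fun X Y f => by
        refine Sigma.hom_ext _ _ fun p => ?_
        erw [← Category.assoc, poly_ι_comp_map σ Sgn f p, Sigma.ι_desc, ← Category.assoc,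
          Sigma.ι_desc, Category.assoc, ← F.map_comp] }
  left_inv α := by
    apply NatTrans.ext
    funext X
    refine Sigma.hom_ext _ _ fun p => ?_
    dsimp only
    erw [Sigma.ι_desc, Category.assoc, ← α.naturality, ← Category.assoc,
      poly_ι_comp_map σ Sgn p.2 ⟨p.1, 𝟙 (σ p.1)⟩, Category.id_comp]
    rfl
  right_inv u := by
    funext i
    dsimp only
    rw [Sigma.ι_desc]
    simp

/-- The polynomial functor as an object of the category of finitary endofunctors. -/
noncomputable def polyObj (hσfp : ∀ i, _root_.IsFinitelyPresentable (σ i)) (Sgn : ι → A) :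
    ObjectProperty.FullSubcategory (fun F : A ⥤ A => Finitary F) :=
  ⟨polynomialFunctor σ Sgn, poly_finitary σ Sgn hσfp⟩

/-- The adjunction hom-equivalence for the polynomial functor. -/
noncomputable def polyEquiv (hσfp : ∀ i, _root_.IsFinitelyPresentable (σ i)) (Sgn : ι → A)
    (F : ObjectProperty.FullSubcategory (fun F : A ⥤ A => Finitary F)) :
    (polyObj σ hσfp Sgn ⟶ F) ≃ (Sgn ⟶ (sigForget σ).obj F) :=
  InducedCategory.homEquiv.trans (polyEquivCore σ Sgn F.obj)

theorem polyEquiv_natural (hσfp : ∀ i, _root_.IsFinitelyPresentable (σ i)) (Sgn : ι → A)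
    (F F' : ObjectProperty.FullSubcategory (fun F : A ⥤ A => Finitary F)) (g : F ⟶ F')
    (h : polyObj σ hσfp Sgn ⟶ F) :
    polyEquiv σ hσfp Sgn F' (h ≫ g) = polyEquiv σ hσfp Sgn F h ≫ (sigForget σ).map g := by
  funext i
  simp only [polyEquiv, polyEquivCore, sigForget, Equiv.coe_fn_mk, Equiv.trans_apply,
    InducedCategory.homEquiv]
  change _ = (_ ≫ _) ≫ _
  erw [Category.assoc]
  rfl

end Adj
end Stmt15Aux
namespace Stmt15Aux
section Reflect

variable {A : Type u} [Category.{v} A] [HasColimits A]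
variable {ι : Type v} (σ : ι → A)

theorem isIso_app_of_iso {F G : A ⥤ A} (f : F ⟶ G) {X Y : A} (e : X ≅ Y)
    (h : IsIso (f.app Y)) : IsIso (f.app X) := by
  have hnat := f.naturality e.hom
  have key : f.app X = F.map e.hom ≫ f.app Y ≫ G.map e.inv := by
    rw [← Category.assoc, hnat, Category.assoc, ← G.map_comp, e.hom_inv_id, G.map_id,
      Category.comp_id]
  rw [key]
  have := h
  infer_instance

theorem sigForget_reflectsIso (hσall : ∀ X : A, _root_.IsFinitelyPresentable X → ∃ i, Nonempty (X ≅ σ i))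
    (hpres : ∀ X : A, Nonempty (FilteredFpPresentation X)) :
    (sigForget σ).ReflectsIsomorphisms := by
  constructor
  intro F G f hf
  have happ : ∀ i, IsIso (f.hom.app (σ i)) := fun i => by
    have : IsIso ((Pi.eval (fun _ : ι => A) i).map ((sigForget σ).map f)) := inferInstance
    exact this
  have hfp : ∀ X : A, _root_.IsFinitelyPresentable X → IsIso (f.hom.app X) := by
    intro X hX
    obtain ⟨i, ⟨e⟩⟩ := hσall X hX
    exact isIso_app_of_iso f.hom e (happ i)
  have hall : ∀ X : A, IsIso (f.hom.app X) := by
    intro X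
    obtain ⟨pres⟩ := hpres X
    letI := pres.cat; letI := pres.filt
    obtain ⟨hc⟩ := pres.isColimit
    obtain ⟨eX⟩ := pres.iso
    haveI hw : ∀ j, IsIso ((Functor.whiskerLeft pres.D f.hom).app j) := fun j =>
      hfp _ (pres.fp j)
    haveI : IsIso (Functor.whiskerLeft pres.D f.hom) := NatIso.isIso_of_isIso_app _
    have hF : IsColimit (F.obj.mapCocone pres.c) := by
      haveI := F.property pres.J
      exact isColimitOfPreserves F.obj hc
    have hG : IsColimit (G.obj.mapCocone pres.c) := by
      haveI := G.property pres.J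
      exact isColimitOfPreserves G.obj hc
    have key : f.hom.app pres.c.pt =
        (IsColimit.coconePointsIsoOfNatIso hF hG
          (asIso (Functor.whiskerLeft pres.D f.hom))).hom := by
      refine hF.hom_ext fun j => ?_
      rw [IsColimit.comp_coconePointsIsoOfNatIso_hom]
      exact f.hom.naturality (pres.c.ι.app j)
    have hpt : IsIso (f.hom.app pres.c.pt) := by rw [key]; infer_instance
    exact isIso_app_of_iso f.hom eX.symm hpt
  haveI : ∀ X, IsIso (((ObjectProperty.ι (fun F : A ⥤ A => Finitary F)).map f).app X) :=
    hall
  haveI : IsIso ((ObjectProperty.ι (fun F : A ⥤ A => Finitary F)).map f) :=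
    NatIso.isIso_of_isIso_app _
  exact isIso_of_fully_faithful (ObjectProperty.ι _) f

end Reflect
end Stmt15Aux
namespace Stmt15Aux
section Pres

variable {A : Type u} [Category.{v} A] [HasColimits A]
variable {ι : Type v} (σ : ι → A)

theorem finitary_closedUnder (K : Type u₂) [Category.{v₂} K] [HasColimitsOfShape K A] :
    ObjectProperty.IsClosedUnderColimitsOfShape (fun F : A ⥤ A => Finitary F) K :=
  ⟨fun _ ⟨h⟩ => finitary_of_isColimit h.diag (Cocone.mk _ h.ι) h.prop_diag_obj h.isColimit⟩

theorem sigForget_preservesShape :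
    PreservesColimitsOfShape WalkingParallelPair (sigForget (A := A) σ) := by
  haveI : CreatesColimitsOfShape WalkingParallelPair
      (ObjectProperty.ι (fun F : A ⥤ A => Finitary F)) :=
    by haveI := finitary_closedUnder (A := A) WalkingParallelPair; infer_instance
  constructor
  intro P
  constructor
  intro c hc
  have hIncl : IsColimit ((ObjectProperty.ι
      (fun F : A ⥤ A => Finitary F)).mapCocone c) :=
    isColimitOfPreserves _ hc
  have hev : ∀ i : ι, IsColimit (((evaluation A A).obj (σ i)).mapCocone
      ((ObjectProperty.ι (fun F : A ⥤ A => Finitary F)).mapCocone c)) := fun i =>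
    isColimitOfPreserves _ hIncl
  let toEv : ∀ (s : Cocone (P ⋙ sigForget (A := A) σ)) (i : ι),
      Cocone ((P ⋙ ObjectProperty.ι (fun F : A ⥤ A => Finitary F)) ⋙
        (evaluation A A).obj (σ i)) := fun s i =>
    { pt := s.pt i
      ι :=
        { app := fun k => s.ι.app k i
          naturality := fun k k' g => congr_fun (s.ι.naturality g) i } }
  exact ⟨{ desc := fun s => fun i => (hev i).desc (toEv s i)
           fac := fun s k => funext fun i => (hev i).fac (toEv s i) k
           uniq := fun s m hm => funext fun i =>
             (hev i).uniq (toEv s i) (m i) (fun k => congr_fun (hm k) i) }⟩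

end Pres
end Stmt15Aux
/-- For an lfp category `A` with its (small) family `σ : ι → A` of
representatives of finitely presentable objects, the polynomial-functor construction is
left adjoint to the forgetful functor `U : [A,A]_fin ⥤ Sig(A)`, `(UF)_n = F n`, and `U`
is monadic. -/
theorem stmt15 {A : Type u} [Category.{v} A] [HasColimits A] (hA : IsLFP A)
    (ι : Type v) (σ : ι → A) (hσfp : ∀ i, _root_.IsFinitelyPresentable (σ i))
    (hσall : ∀ X : A, _root_.IsFinitelyPresentable X → ∃ i, Nonempty (X ≅ σ i)) :
    ∃ Φ : (ι → A) ⥤ ObjectProperty.FullSubcategory (fun F : A ⥤ A => Finitary F),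
      (∀ Sgn : ι → A, Nonempty ((Φ.obj Sgn).obj ≅ polynomialFunctor σ Sgn)) ∧
      Nonempty (Φ ⊣ sigForget σ) ∧
      Nonempty (MonadicRightAdjoint (sigForget σ)) := by
  obtain ⟨-, -, hpres⟩ := hA
  refine ⟨Adjunction.leftAdjointOfEquiv (fun Sgn F => Stmt15Aux.polyEquiv σ hσfp Sgn F)
      (fun Sgn F F' g h => Stmt15Aux.polyEquiv_natural σ hσfp Sgn F F' g h),
    fun Sgn => ⟨Iso.refl _⟩,
    ⟨Adjunction.adjunctionOfEquivLeft _ _⟩, ⟨?_⟩⟩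
  haveI := Stmt15Aux.sigForget_reflectsIso σ hσall hpres
  haveI : HasColimitsOfShape WalkingParallelPair
      (ObjectProperty.FullSubcategory (fun F : A ⥤ A => Finitary F)) :=
    by haveI := Stmt15Aux.finitary_closedUnder (A := A) WalkingParallelPair; infer_instance
  haveI : HasReflexiveCoequalizers (ObjectProperty.FullSubcategory (fun F : A ⥤ A => Finitary F)) :=
    inferInstance
  haveI := Stmt15Aux.sigForget_preservesShape σ
  haveI : CategoryTheory.MonadX.PreservesColimitOfIsReflexivePair (sigForget (A := A) σ) :=
    ⟨by intros; infer_instance⟩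
  exact CategoryTheory.MonadX.monadicOfHasPreservesReflexiveCoequalizersOfReflectsIsomorphisms
    (Adjunction.adjunctionOfEquivLeft (fun Sgn F => Stmt15Aux.polyEquiv σ hσfp Sgn F)
      (fun Sgn F F' g h => Stmt15Aux.polyEquiv_natural σ hσfp Sgn F F' g h))
end
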